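/- Convexity of the corrected losses: suppose z ↦ ℓ(z,t) is convex on ℝ for each t ∈ {+1,−1} and ℓ(z,+1) − ℓ(z,−1) = −z for all z ∈ ℝ. Then (i) L̃(z) = −z/(π₊ − π₋) for all z (so L̃ is affine); (ii) L(z,+1) = ℓ(z,+1) − (π₋/(π₊ − π₋))·z and L(z,−1) = ℓ(z,+1) + (π₊/(π₊ − π₋))·z for all z; consequently z ↦ L(z,+1) and z ↦ L(z,−1) are convex functions on ℝ. -/
import Mathlib

lemma linear_convexOn (c : ℝ) : ConvexOn ℝ Set.univ (fun z : ℝ => c * z) :=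
  ⟨convex_univ, fun x _ y _ a b _ _ _ => le_of_eq (by simp only [smul_eq_mul]; ring)⟩

/-- Convexity of the corrected losses under the linear-odd condition
`ℓ(z,+1) − ℓ(z,−1) = −z`. -/
theorem corrected_losses_convex
    (πp πm : ℝ) (hπp : πp ∈ Set.Ioo (0 : ℝ) 1) (hπm : πm = 1 - πp) (hne : πp ≠ πm)
    (ℓ : ℝ → ℝ → ℝ)
    (L : ℝ → ℝ → ℝ) (hL : ∀ z t, L z t = (πp * ℓ z t - πm * ℓ z (-t)) / (πp - πm))
    (Lt : ℝ → ℝ) (hLt : ∀ z, Lt z = (ℓ z 1 - ℓ z (-1)) / (πp - πm))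
    (hconv : ∀ t ∈ ({1, -1} : Set ℝ), ConvexOn ℝ Set.univ (fun z => ℓ z t))
    (hodd : ∀ z : ℝ, ℓ z 1 - ℓ z (-1) = -z) :
    (∀ z : ℝ, Lt z = -z / (πp - πm))
      ∧ (∀ z : ℝ, L z 1 = ℓ z 1 - (πm / (πp - πm)) * z)
      ∧ (∀ z : ℝ, L z (-1) = ℓ z 1 + (πp / (πp - πm)) * z)
      ∧ ConvexOn ℝ Set.univ (fun z => L z 1)
      ∧ ConvexOn ℝ Set.univ (fun z => L z (-1)) := by
  have hd : πp - πm ≠ 0 := sub_ne_zero.mpr hne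
  have h1 : ∀ z : ℝ, L z 1 = ℓ z 1 - (πm / (πp - πm)) * z := by
    intro z
    have h := hodd z
    rw [hL]
    field_simp
    linear_combination πm * h
  have h2 : ∀ z : ℝ, L z (-1) = ℓ z 1 + (πp / (πp - πm)) * z := by
    intro z
    have h := hodd z
    have : L z (-1) = (πp * ℓ z (-1) - πm * ℓ z 1) / (πp - πm) := by
      rw [hL]; norm_num
    rw [this]
    field_simp
    linear_combination -πp * h
  refine ⟨fun z => by rw [hLt, hodd], h1, h2, ?_, ?_⟩
  · have : (fun z => L z 1) = fun z => ℓ z 1 + (-(πm / (πp - πm))) * z := by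
      funext z; rw [h1 z]; ring
    rw [this]
    exact (hconv 1 (by simp)).add (linear_convexOn _)
  · have : (fun z => L z (-1)) = fun z => ℓ z 1 + (πp / (πp - πm)) * z := by
      funext z; rw [h2 z]
    rw [this]
    exact (hconv 1 (by simp)).add (linear_convexOn _)
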